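/- Suppose there exist $C_1, C_2 > 0$ and $\alpha \in (0,1)$ such that $\frac{C_1}{1+\lambda} \le E_{\alpha}(-\lambda) \le \frac{C_2}{1+\lambda}$ for all $\lambda \ge 0$. Let $(\lambda_n)$ be an increasing sequence with $\lambda_n \to \infty$, $\lambda_n > e$, fix $\beta, T > 0$, and set $\epsilon_n = \frac{2\ln\ln\lambda_n}{\ln\lambda_n}$, $\Phi_n$ of norm $\frac{1}{\lambda_n^{\beta}\ln\lambda_n}$. Then $\|\Phi_n\| \to 0$, the quantities $u_n := \frac{1}{\lambda_n^{\beta}\ln\lambda_n} \cdot \frac{1}{E_{\alpha}(-\lambda_n^{\beta} T^{\alpha})}$ remain bounded, but $\tilde u_n := \frac{1}{\lambda_n^{\beta}\ln\lambda_n}\cdot \frac{1}{E_{\alpha}(-\lambda_n^{\beta+\epsilon_n} T^{\alpha})} \to \infty$ as $n \to \infty$. -/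

import Mathlib

open Filter

/-- ill-posedness example for the backward problem under perturbation of
the fractional order `β`. Here `E μ` stands for `E_α(-μ)` and satisfies the two-sided
algebraic bounds; `φ n = 1/(λₙ^β ln λₙ)` is the norm of the final datum `Φₙ`. -/
theorem backward_problem_instability (E : ℝ → ℝ) (C₁ C₂ α : ℝ)
    (hC₁ : 0 < C₁) (hC₂ : 0 < C₂) (hα : α ∈ Set.Ioo (0:ℝ) 1)
    (hE : ∀ μ : ℝ, 0 ≤ μ → C₁ / (1 + μ) ≤ E μ ∧ E μ ≤ C₂ / (1 + μ))
    (lam : ℕ → ℝ) (hmono : StrictMono lam) (htop : Tendsto lam atTop atTop)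
    (he : ∀ n, Real.exp 1 < lam n) (β T : ℝ) (hβ : 0 < β) (hT : 0 < T) :
    Tendsto (fun n => 1 / (lam n ^ β * Real.log (lam n))) atTop (nhds 0) ∧
    (∃ Cb : ℝ, ∀ n,
        1 / (lam n ^ β * Real.log (lam n)) * (1 / E (lam n ^ β * T ^ α)) ≤ Cb) ∧
    Tendsto (fun n =>
        1 / (lam n ^ β * Real.log (lam n)) *
          (1 / E (lam n ^ (β + 2 * Real.log (Real.log (lam n)) / Real.log (lam n))
                    * T ^ α)))
      atTop atTop := by
  have hTα : 0 < T ^ α := Real.rpow_pos_of_pos hT α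
  have h1 : ∀ n, 1 < lam n := fun n => by
    have h := Real.add_one_le_exp (1:ℝ)
    have := he n; linarith
  have hL : ∀ n, 1 < Real.log (lam n) := fun n => by
    have := Real.log_lt_log (Real.exp_pos 1) (he n)
    simpa using this
  have hP : ∀ n, 1 < lam n ^ β := fun n =>
    (Real.one_lt_rpow_iff_of_pos (lt_trans one_pos (h1 n))).mpr (Or.inl ⟨h1 n, hβ⟩)
  have hPL : ∀ n, lam n ^ β ≤ lam n ^ β * Real.log (lam n) := fun n =>
    le_mul_of_one_le_right (le_of_lt (lt_trans one_pos (hP n))) (le_of_lt (hL n))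
  have hPtop : Tendsto (fun n => lam n ^ β) atTop atTop :=
    (tendsto_rpow_atTop hβ).comp htop
  have hPLtop : Tendsto (fun n => lam n ^ β * Real.log (lam n)) atTop atTop :=
    tendsto_atTop_mono hPL hPtop
  refine ⟨?_, ?_, ?_⟩
  · simpa only [one_div, Pi.inv_def] using hPLtop.inv_tendsto_atTop
  · refine ⟨(1 + T ^ α) / C₁, fun n => ?_⟩
    set P := lam n ^ β with hPdef
    set L := Real.log (lam n) with hLdef
    have hPpos : 0 < P := lt_trans one_pos (hP n)
    have hLpos : 0 < L := lt_trans one_pos (hL n)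
    have hμ : 0 ≤ P * T ^ α := by positivity
    obtain ⟨hlow, hup⟩ := hE (P * T ^ α) hμ
    have h1μ : 0 < 1 + P * T ^ α := by positivity
    have hEpos : 0 < E (P * T ^ α) := lt_of_lt_of_le (by positivity) hlow
    have hinv : 1 / E (P * T ^ α) ≤ (1 + P * T ^ α) / C₁ := by
      rw [div_le_div_iff₀ hEpos hC₁]
      have := (div_le_iff₀ h1μ).mp hlow
      nlinarith
    have hstep : 1 / (P * L) * (1 / E (P * T ^ α)) ≤
        1 / (P * L) * ((1 + P * T ^ α) / C₁) :=
      mul_le_mul_of_nonneg_left hinv (by positivity)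
    refine hstep.trans ?_
    have key : 1 + P * T ^ α ≤ (1 + T ^ α) * (P * L) := by
      nlinarith [hP n, hL n, hTα, hPpos, hLpos]
    calc 1 / (P * L) * ((1 + P * T ^ α) / C₁)
        = (1 + P * T ^ α) / (P * L * C₁) := by
          field_simp
      _ ≤ (1 + T ^ α) * (P * L) / (P * L * C₁) := by gcongr
      _ = (1 + T ^ α) / C₁ := by
          field_simp
  · have hbound : ∀ n, T ^ α / C₂ * Real.log (lam n) ≤
        1 / (lam n ^ β * Real.log (lam n)) *
          (1 / E (lam n ^ (β + 2 * Real.log (Real.log (lam n)) / Real.log (lam n))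
                    * T ^ α)) := by
      intro n
      set P := lam n ^ β with hPdef
      set L := Real.log (lam n) with hLdef
      have hPpos : 0 < P := lt_trans one_pos (hP n)
      have hLpos : 0 < L := lt_trans one_pos (hL n)
      have hlampos : 0 < lam n := lt_trans one_pos (h1 n)
      have hexp : lam n ^ (β + 2 * Real.log L / L) = P * L ^ (2:ℝ) := by
        rw [Real.rpow_add hlampos, ← hPdef]
        congr 1
        rw [Real.rpow_def_of_pos hlampos, Real.rpow_def_of_pos hLpos]
        congr 1
        field_simp
        ring
      rw [hexp]
      have hL2 : L ^ (2:ℝ) = L * L := by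
        rw [show (2:ℝ) = ((2:ℕ):ℝ) by norm_num, Real.rpow_natCast]; ring
      rw [hL2]
      set μ := P * (L * L) * T ^ α with hμdef
      have hμ0 : 0 ≤ μ := by positivity
      obtain ⟨hlow, hup⟩ := hE μ hμ0
      have h1μ : 0 < 1 + μ := by positivity
      have hEpos : 0 < E μ := lt_of_lt_of_le (by positivity) hlow
      have hinv : μ / C₂ ≤ 1 / E μ := by
        rw [div_le_div_iff₀ hC₂ hEpos]
        have := (le_div_iff₀ h1μ).mp hup
        nlinarith
      have hstep : 1 / (P * L) * (μ / C₂) ≤ 1 / (P * L) * (1 / E μ) :=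
        mul_le_mul_of_nonneg_left hinv (by positivity)
      refine le_trans (le_of_eq ?_) hstep
      rw [hμdef]
      field_simp
    have hcL : Tendsto (fun n => T ^ α / C₂ * Real.log (lam n)) atTop atTop := by
      have : Tendsto (fun n => Real.log (lam n)) atTop atTop :=
        Real.tendsto_log_atTop.comp htop
      exact this.const_mul_atTop (by positivity)
    exact tendsto_atTop_mono hbound hcL
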